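/- Local Gaussian representation: for any joint CDF F of a pair of real random variables and any point (y,d) with F(y,d) strictly between the Fréchet bounds max(F_Y(y)+F_D(d)-1, 0) and min(F_Y(y), F_D(d)), where F_Y and F_D are the marginals, there exists a unique ρ ∈ (-1,1) such that F(y,d) = Φ₂(Φ⁻¹(F_Y(y)), Φ⁻¹(F_D(d)); ρ), provided 0 < F_Y(y) < 1 and 0 < F_D(d) < 1. -/

import Mathlib

open MeasureTheory Real Set Filter Topology

noncomputable def stdPdf (x : ℝ) : ℝ := (Real.sqrt (2 * Real.pi))⁻¹ * Real.exp (-(x ^ 2) / 2)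

noncomputable def stdCdf (x : ℝ) : ℝ := ∫ v in Set.Iio x, stdPdf v

noncomputable def Phi2 (μ ν ρ : ℝ) : ℝ :=
  ∫ v in Set.Iio μ, stdCdf ((ν - ρ * v) / Real.sqrt (1 - ρ ^ 2)) * stdPdf v

noncomputable def phi2 (μ ν ρ : ℝ) : ℝ :=
  (2 * Real.pi * Real.sqrt (1 - ρ ^ 2))⁻¹ *
    Real.exp (-(μ ^ 2 - 2 * ρ * μ * ν + ν ^ 2) / (2 * (1 - ρ ^ 2)))

lemma stdPdf_pos (x : ℝ) : 0 < stdPdf x := by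
  unfold stdPdf
  positivity

lemma stdPdf_nonneg (x : ℝ) : 0 ≤ stdPdf x := (stdPdf_pos x).le

lemma stdPdf_le (x : ℝ) : stdPdf x ≤ (Real.sqrt (2 * Real.pi))⁻¹ := by
  unfold stdPdf
  have h1 : Real.exp (-(x ^ 2) / 2) ≤ 1 := by
    rw [Real.exp_le_one_iff]
    nlinarith [sq_nonneg x]
  have h2 : (0:ℝ) < (Real.sqrt (2 * Real.pi))⁻¹ := by positivity
  nlinarith

lemma continuous_stdPdf : Continuous stdPdf := by
  unfold stdPdf
  fun_prop

lemma stdPdf_eq (x : ℝ) : stdPdf x = (Real.sqrt (2 * Real.pi))⁻¹ * Real.exp (-(1/2 : ℝ) * x ^ 2) := by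
  unfold stdPdf; ring_nf

lemma integrable_stdPdf : Integrable stdPdf := by
  have := (integrable_exp_neg_mul_sq (by norm_num : (0:ℝ) < 1/2)).const_mul (Real.sqrt (2 * Real.pi))⁻¹
  refine this.congr ?_
  filter_upwards with x
  rw [stdPdf_eq]

lemma integral_stdPdf : ∫ x, stdPdf x = 1 := by
  have h := integral_gaussian (1/2 : ℝ)
  have : ∫ x, stdPdf x = (Real.sqrt (2 * Real.pi))⁻¹ * ∫ x, Real.exp (-(1/2:ℝ) * x ^ 2) := by
    rw [← integral_const_mul]
    congr 1; ext x; rw [stdPdf_eq]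
  rw [this, h]
  have : Real.pi / (1/2 : ℝ) = 2 * Real.pi := by ring
  rw [this]
  rw [inv_mul_cancel₀ (by positivity : Real.sqrt (2 * Real.pi) ≠ 0)]

lemma integrable_abs_mul_stdPdf : Integrable (fun x => |x| * stdPdf x) := by
  have h := integrable_mul_exp_neg_mul_sq (by norm_num : (0:ℝ) < 1/2)
  have h2 := (h.const_mul (Real.sqrt (2 * Real.pi))⁻¹).abs
  refine h2.congr ?_
  filter_upwards with x
  have : |(Real.sqrt (2 * Real.pi))⁻¹ * (x * Real.exp (-(1/2:ℝ) * x ^ 2))| = |x| * stdPdf x := by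
    rw [abs_mul, abs_mul, stdPdf_eq, abs_of_nonneg (by positivity : (0:ℝ) ≤ (Real.sqrt (2 * Real.pi))⁻¹),
      abs_of_nonneg (Real.exp_nonneg _)]
    ring
  rw [this]

lemma stdCdf_eq_Iic (x : ℝ) : stdCdf x = ∫ v in Set.Iic x, stdPdf v :=
  (integral_Iic_eq_integral_Iio).symm

lemma stdCdf_sub (a b : ℝ) : stdCdf b - stdCdf a = ∫ v in a..b, stdPdf v := by
  rw [stdCdf_eq_Iic, stdCdf_eq_Iic]
  exact intervalIntegral.integral_Iic_sub_Iic integrable_stdPdf.integrableOn integrable_stdPdf.integrableOn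

lemma hasDerivAt_stdCdf (x : ℝ) : HasDerivAt stdCdf (stdPdf x) x := by
  have key : ∀ y, stdCdf y = stdCdf 0 + ∫ v in (0:ℝ)..y, stdPdf v := by
    intro y
    rw [← stdCdf_sub 0 y]; ring
  have h : HasDerivAt (fun y => stdCdf 0 + ∫ v in (0:ℝ)..y, stdPdf v) (stdPdf x) x := by
    refine HasDerivAt.const_add _ ?_
    exact intervalIntegral.integral_hasDerivAt_right
      (integrable_stdPdf.intervalIntegrable)
      (continuous_stdPdf.stronglyMeasurable.stronglyMeasurableAtFilter)
      continuous_stdPdf.continuousAt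
  exact h.congr_of_eventuallyEq (Filter.Eventually.of_forall fun y => key y)

lemma continuous_stdCdf : Continuous stdCdf :=
  continuous_iff_continuousAt.2 fun x => (hasDerivAt_stdCdf x).continuousAt

lemma stdCdf_mono : Monotone stdCdf := by
  intro a b hab
  have : stdCdf b - stdCdf a = ∫ v in a..b, stdPdf v := stdCdf_sub a b
  have h2 : 0 ≤ ∫ v in a..b, stdPdf v :=
    intervalIntegral.integral_nonneg hab fun u _ => stdPdf_nonneg u
  linarith

lemma stdCdf_nonneg (x : ℝ) : 0 ≤ stdCdf x :=
  setIntegral_nonneg measurableSet_Iio fun v _ => stdPdf_nonneg v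

lemma stdCdf_le_one (x : ℝ) : stdCdf x ≤ 1 := by
  rw [← integral_stdPdf]
  exact setIntegral_le_integral integrable_stdPdf (Filter.Eventually.of_forall fun v => stdPdf_nonneg v)

lemma stdCdf_strictMono : StrictMono stdCdf := by
  intro a b hab
  have h : stdCdf b - stdCdf a = ∫ v in a..b, stdPdf v := stdCdf_sub a b
  have h2 : 0 < ∫ v in a..b, stdPdf v := by
    rw [intervalIntegral.integral_of_le hab.le]
    refine (setIntegral_pos_iff_support_of_nonneg_ae ?_ ?_).2 ?_
    · exact Filter.Eventually.of_forall fun v => stdPdf_nonneg v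
    · exact integrable_stdPdf.integrableOn
    · have : Function.support stdPdf ∩ Ioc a b = Ioc a b := by
        ext u; simp [Function.mem_support, (stdPdf_pos u).ne']
      rw [this]
      simp [Real.volume_Ioc, hab]
  linarith

lemma stdCdf_neg (x : ℝ) : stdCdf (-x) = 1 - stdCdf x := by
  have h1 : stdCdf x + ∫ v in Ioi x, stdPdf v = 1 := by
    rw [stdCdf_eq_Iic, intervalIntegral.integral_Iic_add_Ioi integrable_stdPdf.integrableOn
      integrable_stdPdf.integrableOn, integral_stdPdf]
  have h2 : ∫ v in Ioi x, stdPdf v = stdCdf (-x) := by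
    rw [stdCdf_eq_Iic]
    rw [← integral_comp_neg_Ioi x stdPdf]
    congr 1; ext v
    unfold stdPdf; rw [neg_pow]; ring_nf
  linarith [h1, h2]

lemma stdCdf_tendsto_one : Tendsto stdCdf atTop (𝓝 1) := by
  have h := tendsto_setIntegral_of_monotone (μ := (volume : Measure ℝ))
    (s := fun x : ℝ => Iio x) (f := stdPdf)
    (fun i => measurableSet_Iio) (fun a b hab => Iio_subset_Iio hab) ?_
  · rw [iUnion_Iio] at h
    exact (show Tendsto (fun i => ∫ x in Iio i, stdPdf x) atTop (𝓝 1) by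
      simpa [Measure.restrict_univ, integral_stdPdf] using h)
  · rw [iUnion_Iio]
    exact integrable_stdPdf.integrableOn

lemma stdCdf_tendsto_zero : Tendsto stdCdf atBot (𝓝 0) := by
  have h := tendsto_setIntegral_of_antitone (μ := (volume : Measure ℝ))
    (s := fun x : ℝ => Iio (-x)) (f := stdPdf)
    (fun i => measurableSet_Iio)
    (fun a b hab => Iio_subset_Iio (by linarith))
    ⟨0, integrable_stdPdf.integrableOn⟩
  have hempty : (⋂ n : ℝ, Iio (-n)) = ∅ := by
    ext v; simp only [mem_iInter, mem_Iio, mem_empty_iff_false, iff_false, not_forall, not_lt]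
    exact ⟨-v, by linarith⟩
  rw [hempty] at h
  simp only [Measure.restrict_empty, integral_zero_measure] at h
  have : Tendsto (fun x : ℝ => -x) atBot atTop := tendsto_neg_atBot_atTop
  have h2 := h.comp this
  refine h2.congr fun x => ?_
  simp [stdCdf]

lemma hasDerivAt_stdPdf (x : ℝ) : HasDerivAt stdPdf (-x * stdPdf x) x := by
  have h1 : HasDerivAt (fun y : ℝ => -(y ^ 2) / 2) (-x) x := by
    have := ((hasDerivAt_pow 2 x).neg).div_const 2
    simpa using this.congr_deriv (by ring)
  have h2 := (h1.exp).const_mul (Real.sqrt (2 * Real.pi))⁻¹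
  refine h2.congr_deriv ?_
  unfold stdPdf; ring

lemma one_sub_sq_pos {ρ : ℝ} (hρ : ρ ∈ Ioo (-1:ℝ) 1) : 0 < 1 - ρ ^ 2 := by
  obtain ⟨h1, h2⟩ := hρ; nlinarith

lemma sqrt_one_sub_sq_pos {ρ : ℝ} (hρ : ρ ∈ Ioo (-1:ℝ) 1) : 0 < Real.sqrt (1 - ρ ^ 2) :=
  Real.sqrt_pos.2 (one_sub_sq_pos hρ)

lemma sq_sqrt_one_sub {ρ : ℝ} (hρ : ρ ∈ Ioo (-1:ℝ) 1) :
    Real.sqrt (1 - ρ ^ 2) ^ 2 = 1 - ρ ^ 2 :=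
  Real.sq_sqrt (one_sub_sq_pos hρ).le

lemma hasDerivAt_inner (n v : ℝ) {ρ : ℝ} (hρ : ρ ∈ Ioo (-1:ℝ) 1) :
    HasDerivAt (fun r => (n - r * v) / Real.sqrt (1 - r ^ 2))
      ((ρ * n - v) / Real.sqrt (1 - ρ ^ 2) ^ 3) ρ := by
  have hpos := one_sub_sq_pos hρ
  have hs := sqrt_one_sub_sq_pos hρ
  have hsq := sq_sqrt_one_sub hρ
  have hnum : HasDerivAt (fun r : ℝ => n - r * v) (-v) ρ := by
    simpa using ((hasDerivAt_id ρ).mul_const v).const_sub n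
  have hinner : HasDerivAt (fun r : ℝ => 1 - r ^ 2) (-(2 * ρ)) ρ := by
    simpa using (hasDerivAt_pow 2 ρ).const_sub 1
  have hden : HasDerivAt (fun r : ℝ => Real.sqrt (1 - r ^ 2))
      (-(2 * ρ) / (2 * Real.sqrt (1 - ρ ^ 2))) ρ := hinner.sqrt hpos.ne'
  have h := hnum.div hden hs.ne'
  refine h.congr_deriv ?_
  rw [div_eq_div_iff (by positivity) (by positivity)]
  field_simp
  linear_combination (-v) * hsq

lemma hasDerivAt_G (m n v : ℝ) {ρ : ℝ} (hρ : ρ ∈ Ioo (-1:ℝ) 1) :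
    HasDerivAt (fun r => stdCdf ((n - r * v) / Real.sqrt (1 - r ^ 2)) * stdPdf v)
      (stdPdf ((n - ρ * v) / Real.sqrt (1 - ρ ^ 2)) *
        ((ρ * n - v) / Real.sqrt (1 - ρ ^ 2) ^ 3) * stdPdf v) ρ := by
  have h1 := (hasDerivAt_stdCdf ((n - ρ * v) / Real.sqrt (1 - ρ ^ 2))).comp ρ
    (hasDerivAt_inner n v hρ)
  exact h1.mul_const (stdPdf v)

lemma hasDerivAt_g (n : ℝ) {ρ : ℝ} (hρ : ρ ∈ Ioo (-1:ℝ) 1) (v : ℝ) :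
    HasDerivAt (fun u => (Real.sqrt (1 - ρ ^ 2))⁻¹ *
        (stdPdf ((n - ρ * u) / Real.sqrt (1 - ρ ^ 2)) * stdPdf u))
      (stdPdf ((n - ρ * v) / Real.sqrt (1 - ρ ^ 2)) *
        ((ρ * n - v) / Real.sqrt (1 - ρ ^ 2) ^ 3) * stdPdf v) v := by
  have hs := sqrt_one_sub_sq_pos hρ
  have hsq := sq_sqrt_one_sub hρ
  set s := Real.sqrt (1 - ρ ^ 2) with hs_def
  have hlin : HasDerivAt (fun u : ℝ => (n - ρ * u) / s) (-ρ / s) v := by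
    have : HasDerivAt (fun u : ℝ => n - ρ * u) (-ρ) v := by
      simpa using ((hasDerivAt_id v).const_mul ρ).const_sub n
    exact this.div_const s
  have h1 : HasDerivAt (fun u : ℝ => stdPdf ((n - ρ * u) / s))
      (-((n - ρ * v) / s) * stdPdf ((n - ρ * v) / s) * (-ρ / s)) v :=
    HasDerivAt.comp (h₂ := stdPdf) v (hasDerivAt_stdPdf ((n - ρ * v) / s)) hlin
  have h2 := (h1.mul (hasDerivAt_stdPdf v)).const_mul s⁻¹
  refine h2.congr_deriv ?_
  have h3 : s ^ 3 = s * (1 - ρ ^ 2) := by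
    rw [pow_succ, ← hsq]; ring
  field_simp
  linear_combination (-(stdPdf ((n - ρ * v) / s)) * stdPdf v * v) * hsq

lemma stdPdf_tendsto_atBot : Tendsto stdPdf atBot (𝓝 0) := by
  have h1 : Tendsto (fun x : ℝ => x ^ 2) atBot atTop := by
    have h := (tendsto_pow_atTop (n := 2) (by norm_num)).comp
      (tendsto_abs_atBot_atTop (G := ℝ))
    refine h.congr fun x => ?_
    simp [Function.comp, sq_abs]
  have h2 : Tendsto (fun x : ℝ => -(x ^ 2) / 2) atBot atBot := by
    apply Tendsto.atBot_div_const (by norm_num : (0:ℝ) < 2)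
    exact tendsto_neg_atTop_atBot.comp h1
  have h3 := Real.tendsto_exp_atBot.comp h2
  have h4 := h3.const_mul (Real.sqrt (2 * Real.pi))⁻¹
  rw [mul_zero] at h4
  exact h4.congr fun x => rfl

lemma G'_bound {r : ℝ} (hr1 : r < 1) (n : ℝ) {ρ : ℝ} (hr : |ρ| ≤ r) (v : ℝ) :
    |stdPdf ((n - ρ * v) / Real.sqrt (1 - ρ ^ 2)) *
        ((ρ * n - v) / Real.sqrt (1 - ρ ^ 2) ^ 3) * stdPdf v| ≤
      (Real.sqrt (2 * Real.pi))⁻¹ / Real.sqrt (1 - r ^ 2) ^ 3 * ((|n| + |v|) * stdPdf v) := by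
  have hr0 : 0 ≤ r := le_trans (abs_nonneg ρ) hr
  have hs0 : 0 < Real.sqrt (1 - r ^ 2) := Real.sqrt_pos.2 (by nlinarith)
  have hρ2 : ρ ^ 2 ≤ r ^ 2 := by nlinarith [sq_abs ρ, abs_nonneg ρ]
  have hsle : Real.sqrt (1 - r ^ 2) ≤ Real.sqrt (1 - ρ ^ 2) :=
    Real.sqrt_le_sqrt (by linarith)
  have hs : 0 < Real.sqrt (1 - ρ ^ 2) := lt_of_lt_of_le hs0 hsle
  rw [abs_mul, abs_mul, abs_of_nonneg (stdPdf_nonneg _), abs_of_nonneg (stdPdf_nonneg _),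
    abs_div, abs_of_nonneg (by positivity : (0:ℝ) ≤ Real.sqrt (1 - ρ ^ 2) ^ 3)]
  have hnum : |ρ * n - v| ≤ |n| + |v| := by
    calc |ρ * n - v| ≤ |ρ * n| + |v| := abs_sub _ _
    _ ≤ |n| + |v| := by
        rw [abs_mul]
        nlinarith [abs_nonneg n, abs_nonneg v, abs_nonneg ρ,
          mul_le_mul_of_nonneg_right (le_trans hr hr1.le) (abs_nonneg n)]
  have hden : Real.sqrt (1 - r ^ 2) ^ 3 ≤ Real.sqrt (1 - ρ ^ 2) ^ 3 :=
    pow_le_pow_left₀ hs0.le hsle 3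
  have key : stdPdf ((n - ρ * v) / Real.sqrt (1 - ρ ^ 2)) *
      (|ρ * n - v| / Real.sqrt (1 - ρ ^ 2) ^ 3) * stdPdf v ≤
      (Real.sqrt (2 * Real.pi))⁻¹ * ((|n| + |v|) / Real.sqrt (1 - r ^ 2) ^ 3) * stdPdf v := by
    refine mul_le_mul (mul_le_mul (stdPdf_le _) ?_ (by positivity) (by positivity))
      le_rfl (stdPdf_nonneg _) (by positivity)
    exact div_le_div₀ (by positivity) hnum (by positivity) hden
  calc stdPdf ((n - ρ * v) / Real.sqrt (1 - ρ ^ 2)) *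
      (|ρ * n - v| / Real.sqrt (1 - ρ ^ 2) ^ 3) * stdPdf v ≤
      (Real.sqrt (2 * Real.pi))⁻¹ * ((|n| + |v|) / Real.sqrt (1 - r ^ 2) ^ 3) * stdPdf v := key
  _ = (Real.sqrt (2 * Real.pi))⁻¹ / Real.sqrt (1 - r ^ 2) ^ 3 * ((|n| + |v|) * stdPdf v) := by
      ring

lemma integrable_bound (c a : ℝ) : Integrable (fun v => c * ((a + |v|) * stdPdf v)) := by
  refine Integrable.const_mul ?_ c
  have h1 := (integrable_stdPdf.const_mul a).add integrable_abs_mul_stdPdf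
  refine h1.congr ?_
  filter_upwards with v
  simp only [Pi.add_apply]
  ring

lemma continuous_G' (n : ℝ) (ρ : ℝ) :
    Continuous (fun v => stdPdf ((n - ρ * v) / Real.sqrt (1 - ρ ^ 2)) *
      ((ρ * n - v) / Real.sqrt (1 - ρ ^ 2) ^ 3) * stdPdf v) := by
  refine ((continuous_stdPdf.comp (by continuity)).mul (by continuity)).mul continuous_stdPdf

lemma integrable_G' (n : ℝ) {ρ : ℝ} (hρ : ρ ∈ Ioo (-1:ℝ) 1) :
    Integrable (fun v => stdPdf ((n - ρ * v) / Real.sqrt (1 - ρ ^ 2)) *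
      ((ρ * n - v) / Real.sqrt (1 - ρ ^ 2) ^ 3) * stdPdf v) := by
  have habs : |ρ| < 1 := abs_lt.2 ⟨hρ.1, hρ.2⟩
  refine Integrable.mono (g := fun v =>
      (Real.sqrt (2 * Real.pi))⁻¹ / Real.sqrt (1 - |ρ| ^ 2) ^ 3 * ((|n| + |v|) * stdPdf v))
    (integrable_bound _ _) (continuous_G' n ρ).aestronglyMeasurable ?_
  filter_upwards with v
  rw [Real.norm_eq_abs, Real.norm_eq_abs]
  exact le_trans (G'_bound habs n le_rfl v) (le_abs_self _)

lemma coef_helper (s E1 E2 : ℝ) :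
    s⁻¹ * ((Real.sqrt (2 * Real.pi))⁻¹ * E1 * ((Real.sqrt (2 * Real.pi))⁻¹ * E2)) =
      (2 * Real.pi * s)⁻¹ * (E1 * E2) := by
  rw [mul_inv]
  have hcc : (Real.sqrt (2 * Real.pi))⁻¹ * (Real.sqrt (2 * Real.pi))⁻¹ = (2 * Real.pi)⁻¹ := by
    rw [← mul_inv, Real.mul_self_sqrt (by positivity)]
  linear_combination (s⁻¹ * E1 * E2) * hcc

lemma integral_G' (m n : ℝ) {ρ : ℝ} (hρ : ρ ∈ Ioo (-1:ℝ) 1) :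
    ∫ v in Iio m, (stdPdf ((n - ρ * v) / Real.sqrt (1 - ρ ^ 2)) *
        ((ρ * n - v) / Real.sqrt (1 - ρ ^ 2) ^ 3) * stdPdf v) = phi2 m n ρ := by
  have hs := sqrt_one_sub_sq_pos hρ
  have hsq := sq_sqrt_one_sub hρ
  set s := Real.sqrt (1 - ρ ^ 2) with hs_def
  set f : ℝ → ℝ := fun u => s⁻¹ * (stdPdf ((n - ρ * u) / s) * stdPdf u) with hf_def
  have hcont : Continuous f := by
    apply Continuous.mul continuous_const
    exact (continuous_stdPdf.comp (by continuity)).mul continuous_stdPdf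
  have htend : Tendsto f atBot (𝓝 0) := by
    have hg : Tendsto (fun v => s⁻¹ * (Real.sqrt (2 * Real.pi))⁻¹ * stdPdf v) atBot (𝓝 0) := by
      simpa using stdPdf_tendsto_atBot.const_mul (s⁻¹ * (Real.sqrt (2 * Real.pi))⁻¹)
    refine squeeze_zero_norm (fun v => ?_) hg
    rw [Real.norm_eq_abs, hf_def]
    simp only
    rw [abs_mul, abs_mul, abs_of_nonneg (by positivity : (0:ℝ) ≤ s⁻¹),
      abs_of_nonneg (stdPdf_nonneg _), abs_of_nonneg (stdPdf_nonneg _)]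
    have := stdPdf_le ((n - ρ * v) / s)
    calc s⁻¹ * (stdPdf ((n - ρ * v) / s) * stdPdf v) ≤
        s⁻¹ * ((Real.sqrt (2 * Real.pi))⁻¹ * stdPdf v) := by
          apply mul_le_mul_of_nonneg_left ?_ (by positivity)
          exact mul_le_mul_of_nonneg_right this (stdPdf_nonneg v)
    _ = s⁻¹ * (Real.sqrt (2 * Real.pi))⁻¹ * stdPdf v := by ring
  have key := integral_Iic_of_hasDerivAt_of_tendsto (f := f)
    (f' := fun v => stdPdf ((n - ρ * v) / s) * ((ρ * n - v) / s ^ 3) * stdPdf v)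
    (a := m) (m := 0)
    hcont.continuousWithinAt (fun v _ => hasDerivAt_g n hρ v)
    (integrable_G' n hρ).integrableOn htend
  rw [← integral_Iic_eq_integral_Iio, key, sub_zero]
  show s⁻¹ * (stdPdf ((n - ρ * m) / s) * stdPdf m) = phi2 m n ρ
  have hne : (1:ℝ) - ρ ^ 2 ≠ 0 := (one_sub_sq_pos hρ).ne'
  have hAB : -(((n - ρ * m) / s) ^ 2) / 2 + -(m ^ 2) / 2 =
      -(m ^ 2 - 2 * ρ * m * n + n ^ 2) / (2 * (1 - ρ ^ 2)) := by
    rw [div_pow, hsq]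
    field_simp
    ring
  unfold phi2 stdPdf
  rw [← hs_def, ← hAB, Real.exp_add]
  exact coef_helper s _ _

lemma continuous_F (n ρ : ℝ) :
    Continuous (fun v => stdCdf ((n - ρ * v) / Real.sqrt (1 - ρ ^ 2)) * stdPdf v) :=
  (continuous_stdCdf.comp (by continuity)).mul continuous_stdPdf

lemma integrable_F (m n ρ : ℝ) :
    Integrable (fun v => stdCdf ((n - ρ * v) / Real.sqrt (1 - ρ ^ 2)) * stdPdf v)
      (volume.restrict (Iio m)) := by
  refine Integrable.mono integrable_stdPdf.restrict
    (continuous_F n ρ).aestronglyMeasurable ?_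
  filter_upwards with v
  rw [Real.norm_eq_abs, Real.norm_eq_abs, abs_mul, abs_of_nonneg (stdCdf_nonneg _),
    abs_of_nonneg (stdPdf_nonneg _)]
  nlinarith [stdCdf_le_one ((n - ρ * v) / Real.sqrt (1 - ρ ^ 2)), stdPdf_nonneg v,
    stdCdf_nonneg ((n - ρ * v) / Real.sqrt (1 - ρ ^ 2))]

lemma phi2_pos (m n : ℝ) {ρ : ℝ} (hρ : ρ ∈ Ioo (-1:ℝ) 1) : 0 < phi2 m n ρ := by
  have := sqrt_one_sub_sq_pos hρ
  unfold phi2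
  positivity

lemma hasDerivAt_Phi2 (m n : ℝ) {ρ₀ : ℝ} (hρ₀ : ρ₀ ∈ Ioo (-1:ℝ) 1) :
    HasDerivAt (fun ρ => Phi2 m n ρ) (phi2 m n ρ₀) ρ₀ := by
  have habs : |ρ₀| < 1 := abs_lt.2 ⟨hρ₀.1, hρ₀.2⟩
  set ε := (1 - |ρ₀|) / 2 with hε_def
  have hε : 0 < ε := by simp only [hε_def]; linarith
  set r := (1 + |ρ₀|) / 2 with hr_def
  have hr1 : r < 1 := by simp only [hr_def]; linarith
  have hball : ∀ ρ ∈ Metric.ball ρ₀ ε, |ρ| ≤ r ∧ ρ ∈ Ioo (-1:ℝ) 1 := by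
    intro ρ hmem
    rw [Metric.mem_ball, Real.dist_eq] at hmem
    have h1 : |ρ| ≤ r := by
      have := abs_sub_abs_le_abs_sub ρ ρ₀
      simp only [hr_def]; linarith
    refine ⟨h1, ?_⟩
    have := abs_lt.1 (lt_of_le_of_lt h1 hr1)
    exact ⟨this.1, this.2⟩
  have key := hasDerivAt_integral_of_dominated_loc_of_deriv_le
    (μ := volume.restrict (Iio m)) (x₀ := ρ₀)
    (F := fun ρ v => stdCdf ((n - ρ * v) / Real.sqrt (1 - ρ ^ 2)) * stdPdf v)
    (F' := fun ρ v => stdPdf ((n - ρ * v) / Real.sqrt (1 - ρ ^ 2)) *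
        ((ρ * n - v) / Real.sqrt (1 - ρ ^ 2) ^ 3) * stdPdf v)
    (bound := fun v => (Real.sqrt (2 * Real.pi))⁻¹ / Real.sqrt (1 - r ^ 2) ^ 3 *
        ((|n| + |v|) * stdPdf v))
    (Metric.ball_mem_nhds ρ₀ hε)
    (Filter.Eventually.of_forall fun ρ => (continuous_F n ρ).aestronglyMeasurable)
    (integrable_F m n ρ₀)
    (continuous_G' n ρ₀).aestronglyMeasurable
    (Filter.Eventually.of_forall fun v => fun ρ hmem => by
      rw [Real.norm_eq_abs]
      exact G'_bound hr1 n (hball ρ hmem).1 v)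
    (integrable_bound _ _).restrict
    (Filter.Eventually.of_forall fun v => fun ρ hmem =>
      hasDerivAt_G m n v (hball ρ hmem).2)
  have h2 := key.2
  rw [integral_G' m n hρ₀] at h2
  exact h2

section Limits
variable (m n : ℝ)

lemma ae_ne (c : ℝ) : ∀ᵐ v ∂(volume.restrict (Iio m)), v ≠ c := by
  refine ae_restrict_of_ae ?_
  rw [ae_iff]
  have : {v : ℝ | ¬ v ≠ c} = {c} := by ext v; simp
  rw [this]
  exact Real.volume_singleton

lemma sqrt_tendsto_zero {c : ℝ} (hc : c = 1 ∨ c = -1) :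
    Tendsto (fun ρ : ℝ => Real.sqrt (1 - ρ ^ 2)) (𝓝[Ioo (-1:ℝ) 1] c) (𝓝[>] 0) := by
  rw [tendsto_nhdsWithin_iff]
  constructor
  · have hcont : Continuous (fun ρ : ℝ => Real.sqrt (1 - ρ ^ 2)) := by continuity
    have : (fun ρ : ℝ => Real.sqrt (1 - ρ ^ 2)) c = 0 := by
      rcases hc with rfl | rfl <;> norm_num
    exact (hcont.tendsto' c 0 this).mono_left nhdsWithin_le_nhds
  · filter_upwards [self_mem_nhdsWithin] with ρ hρ
    have : 0 < 1 - ρ ^ 2 := by obtain ⟨h1, h2⟩ := hρ; nlinarith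
    exact Real.sqrt_pos.2 this

lemma inner_tendsto {c : ℝ} (hc : c = 1 ∨ c = -1) (v : ℝ) :
    (n - c * v > 0 → Tendsto (fun ρ : ℝ => (n - ρ * v) / Real.sqrt (1 - ρ ^ 2))
      (𝓝[Ioo (-1:ℝ) 1] c) atTop) ∧
    (n - c * v < 0 → Tendsto (fun ρ : ℝ => (n - ρ * v) / Real.sqrt (1 - ρ ^ 2))
      (𝓝[Ioo (-1:ℝ) 1] c) atBot) := by
  have hnum : Tendsto (fun ρ : ℝ => n - ρ * v) (𝓝[Ioo (-1:ℝ) 1] c) (𝓝 (n - c * v)) := by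
    have hcont : Continuous (fun ρ : ℝ => n - ρ * v) := by continuity
    exact (hcont.tendsto' c _ rfl).mono_left nhdsWithin_le_nhds
  have hinv : Tendsto (fun ρ : ℝ => (Real.sqrt (1 - ρ ^ 2))⁻¹)
      (𝓝[Ioo (-1:ℝ) 1] c) atTop := tendsto_inv_nhdsGT_zero.comp (sqrt_tendsto_zero hc)
  constructor
  · intro hpos
    have := hnum.pos_mul_atTop hpos hinv
    refine this.congr fun ρ => (div_eq_mul_inv _ _).symm
  · intro hneg
    have := hnum.neg_mul_atTop hneg hinv
    refine this.congr fun ρ => (div_eq_mul_inv _ _).symm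

lemma tendsto_F_pt {c : ℝ} (hc : c = 1 ∨ c = -1) (v : ℝ) (hv : c * v ≠ n) :
    Tendsto (fun ρ : ℝ => stdCdf ((n - ρ * v) / Real.sqrt (1 - ρ ^ 2)) * stdPdf v)
      (𝓝[Ioo (-1:ℝ) 1] c)
      (𝓝 ({u : ℝ | c * u < n}.indicator stdPdf v)) := by
  rcases lt_or_gt_of_ne (hv) with hlt | hgt
  · have h1 := ((inner_tendsto n hc v).1 (by linarith))
    have h2 := (stdCdf_tendsto_one.comp h1).mul_const (stdPdf v)
    rw [one_mul] at h2
    rw [indicator_of_mem (show v ∈ {u : ℝ | c * u < n} from hlt)]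
    exact h2
  · have h1 := ((inner_tendsto n hc v).2 (by linarith))
    have h2 := (stdCdf_tendsto_zero.comp h1).mul_const (stdPdf v)
    rw [zero_mul] at h2
    rw [indicator_of_notMem (show v ∉ {u : ℝ | c * u < n} by simp only [mem_setOf_eq, not_lt]; linarith)]
    exact h2

lemma tendsto_Phi2 {c : ℝ} (hc : c = 1 ∨ c = -1) :
    Tendsto (fun ρ => Phi2 m n ρ) (𝓝[Ioo (-1:ℝ) 1] c)
      (𝓝 (∫ v in Iio m, {u : ℝ | c * u < n}.indicator stdPdf v)) := by
  refine tendsto_integral_filter_of_dominated_convergence (μ := volume.restrict (Iio m))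
    (bound := stdPdf) ?_ ?_ integrable_stdPdf.restrict ?_
  · exact Filter.Eventually.of_forall fun ρ => (continuous_F n ρ).aestronglyMeasurable
  · refine Filter.Eventually.of_forall fun ρ => ?_
    filter_upwards with v
    rw [Real.norm_eq_abs, abs_mul, abs_of_nonneg (stdCdf_nonneg _),
      abs_of_nonneg (stdPdf_nonneg _)]
    nlinarith [stdCdf_le_one ((n - ρ * v) / Real.sqrt (1 - ρ ^ 2)),
      stdCdf_nonneg ((n - ρ * v) / Real.sqrt (1 - ρ ^ 2)), stdPdf_nonneg v]
  · have hcne : c ≠ 0 := by rcases hc with rfl | rfl <;> norm_num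
    filter_upwards [ae_ne m (n / c)] with v hv
    apply tendsto_F_pt n hc v
    intro h
    apply hv
    rw [eq_div_iff hcne]
    linear_combination h

lemma upper_value :
    ∫ v in Iio m, {u : ℝ | (1:ℝ) * u < n}.indicator stdPdf v
      = min (stdCdf m) (stdCdf n) := by
  have hset : {u : ℝ | (1:ℝ) * u < n} = Iio n := by ext u; simp
  rw [hset, integral_indicator measurableSet_Iio,
    Measure.restrict_restrict measurableSet_Iio]
  have h1 : Iio n ∩ Iio m = Iio (min m n) := by rw [Iio_inter_Iio, min_comm]
  rw [h1, ← stdCdf_mono.map_min]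
  rfl

lemma lower_value :
    ∫ v in Iio m, {u : ℝ | (-1:ℝ) * u < n}.indicator stdPdf v
      = max (stdCdf m + stdCdf n - 1) 0 := by
  have hset : {u : ℝ | (-1:ℝ) * u < n} = Ioi (-n) := by
    ext u; simp only [mem_setOf_eq, mem_Ioi]; constructor <;> intro <;> linarith
  rw [hset, integral_indicator measurableSet_Ioi,
    Measure.restrict_restrict measurableSet_Ioi]
  rcases le_or_gt m (-n) with hcase | hcase
  · have hemp : Ioi (-n) ∩ Iio m = ∅ := by
      ext u
      simp only [mem_inter_iff, mem_Ioi, mem_Iio, mem_empty_iff_false, iff_false, not_and, not_lt]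
      intro h1; linarith
    rw [hemp]
    simp only [Measure.restrict_empty, integral_zero_measure]
    have h1 : stdCdf m ≤ stdCdf (-n) := stdCdf_mono hcase
    rw [stdCdf_neg] at h1
    rw [max_eq_right (by linarith : stdCdf m + stdCdf n - 1 ≤ 0)]
  · have hIoo : Ioi (-n) ∩ Iio m = Ioo (-n) m := by
      ext u; simp only [mem_inter_iff, mem_Ioi, mem_Iio, mem_Ioo]
    rw [hIoo]
    have h2 : ∫ v in Ioo (-n) m, stdPdf v = stdCdf m - stdCdf (-n) := by
      rw [stdCdf_sub, intervalIntegral.integral_of_le hcase.le,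
        integral_Ioc_eq_integral_Ioo]
    have h3 : stdCdf (-n) ≤ stdCdf m := stdCdf_mono hcase.le
    rw [stdCdf_neg] at h3
    rw [h2, stdCdf_neg,
      max_eq_left (by linarith : (0:ℝ) ≤ stdCdf m + stdCdf n - 1)]
    ring

lemma tendsto_Phi2_one :
    Tendsto (fun ρ => Phi2 m n ρ) (𝓝[Ioo (-1:ℝ) 1] 1)
      (𝓝 (min (stdCdf m) (stdCdf n))) := by
  have := tendsto_Phi2 m n (Or.inl rfl)
  rwa [upper_value] at this

lemma tendsto_Phi2_neg_one :
    Tendsto (fun ρ => Phi2 m n ρ) (𝓝[Ioo (-1:ℝ) 1] (-1))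
      (𝓝 (max (stdCdf m + stdCdf n - 1) 0)) := by
  have := tendsto_Phi2 m n (Or.inr rfl)
  rwa [lower_value] at this

end Limits

lemma strictMonoOn_Phi2 (m n : ℝ) :
    StrictMonoOn (fun ρ => Phi2 m n ρ) (Ioo (-1:ℝ) 1) := by
  apply strictMonoOn_of_deriv_pos (convex_Ioo _ _)
  · exact fun ρ hρ => (hasDerivAt_Phi2 m n hρ).continuousAt.continuousWithinAt
  · intro ρ hρ
    rw [interior_Ioo] at hρ
    rw [(hasDerivAt_Phi2 m n hρ).deriv]
    exact phi2_pos m n hρ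

lemma neBot_left : (𝓝[Ioo (-1:ℝ) 1] (-1)).NeBot := by
  apply mem_closure_iff_nhdsWithin_neBot.1
  rw [closure_Ioo (by norm_num : (-1:ℝ) ≠ 1)]
  exact ⟨le_refl _, by norm_num⟩

lemma neBot_right : (𝓝[Ioo (-1:ℝ) 1] (1:ℝ)).NeBot := by
  apply mem_closure_iff_nhdsWithin_neBot.1
  rw [closure_Ioo (by norm_num : (-1:ℝ) ≠ 1)]
  exact ⟨by norm_num, le_refl _⟩

theorem key_result (m n c : ℝ)
    (hlow : max (stdCdf m + stdCdf n - 1) 0 < c)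
    (hup : c < min (stdCdf m) (stdCdf n)) :
    ∃! ρ : ℝ, ρ ∈ Set.Ioo (-1 : ℝ) 1 ∧ c = Phi2 m n ρ := by
  have hsm := strictMonoOn_Phi2 m n
  have := neBot_left
  have := neBot_right
  obtain ⟨a, hac, ha⟩ : ∃ a, Phi2 m n a < c ∧ a ∈ Ioo (-1:ℝ) 1 := by
    have hev := (tendsto_Phi2_neg_one m n).eventually_lt_const hlow
    exact (hev.and self_mem_nhdsWithin).exists
  obtain ⟨b, hbc, hb⟩ : ∃ b, c < Phi2 m n b ∧ b ∈ Ioo (-1:ℝ) 1 := by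
    have hev := (tendsto_Phi2_one m n).eventually_const_lt hup
    exact (hev.and self_mem_nhdsWithin).exists
  have hab : a < b := by
    by_contra h
    push_neg at h
    rcases eq_or_lt_of_le h with rfl | h2
    · linarith
    · have := hsm hb ha h2
      simp only at this
      linarith
  have hsub : Icc a b ⊆ Ioo (-1:ℝ) 1 := fun x hx => ⟨lt_of_lt_of_le ha.1 hx.1, lt_of_le_of_lt hx.2 hb.2⟩
  have hcont : ContinuousOn (fun ρ => Phi2 m n ρ) (Icc a b) := fun x hx =>
    (hasDerivAt_Phi2 m n (hsub hx)).continuousAt.continuousWithinAt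
  have hivt := intermediate_value_Ioo hab.le hcont
  have hcmem : c ∈ Ioo (Phi2 m n a) (Phi2 m n b) := ⟨hac, hbc⟩
  obtain ⟨ρ, hρ_mem, hρ_eq⟩ := hivt hcmem
  have hρΙ : ρ ∈ Ioo (-1:ℝ) 1 := ⟨lt_trans ha.1 hρ_mem.1, lt_trans hρ_mem.2 hb.2⟩
  refine ⟨ρ, ⟨hρΙ, hρ_eq.symm⟩, ?_⟩
  rintro ρ' ⟨hρ'Ι, hρ'_eq⟩
  exact hsm.injOn hρ'Ι hρΙ (hρ'_eq.symm.trans hρ_eq.symm)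

theorem stmt6 {Ω : Type*} [MeasurableSpace Ω] (ℙ : Measure Ω) [IsProbabilityMeasure ℙ]
    (Y D : Ω → ℝ) (F : ℝ → ℝ → ℝ) (FY FD : ℝ → ℝ)
    (hF : ∀ y d, F y d = (ℙ {ω | Y ω ≤ y ∧ D ω ≤ d}).toReal)
    (hFY : ∀ y, FY y = (ℙ {ω | Y ω ≤ y}).toReal)
    (hFD : ∀ d, FD d = (ℙ {ω | D ω ≤ d}).toReal)
    (y d : ℝ)
    (hY0 : 0 < FY y) (hY1 : FY y < 1) (hD0 : 0 < FD d) (hD1 : FD d < 1)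
    (hlow : max (FY y + FD d - 1) 0 < F y d) (hup : F y d < min (FY y) (FD d))
    (m n : ℝ) (hm : stdCdf m = FY y) (hn : stdCdf n = FD d) :
    ∃! ρ : ℝ, ρ ∈ Set.Ioo (-1 : ℝ) 1 ∧ F y d = Phi2 m n ρ := by
  rw [← hm, ← hn] at hlow hup
  exact key_result m n (F y d) hlow hup
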